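/- Let h : [0,∞) → (0,∞) be a function with lim_{x→∞} h(x) = 0. Then there exists a monotone increasing, left-continuous function L : [0,∞) → [1,∞) that is slowly varying at infinity, with lim_{x→∞} L(x) = ∞ and lim_{x→∞} L(x) h(x) = 0. -/

import Mathlib

open Filter Topology Set

noncomputable def auxH (h : ℝ → ℝ) (x : ℝ) : ℝ := sSup ((fun t => min (h t) 1) '' Ici x)
noncomputable def auxS (x : ℝ) : ℝ := Real.exp (Real.sqrt (Real.log x))
noncomputable def auxM (h : ℝ → ℝ) (x : ℝ) : ℝ := (Real.sqrt (auxH h x))⁻¹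
noncomputable def auxPhi (h : ℝ → ℝ) (x : ℝ) : ℝ := sInf ((fun t => auxM h t / auxS t) '' Icc 0 x)
noncomputable def auxL (h : ℝ → ℝ) (x : ℝ) : ℝ := auxS x * auxPhi h x

lemma bddH (h : ℝ → ℝ) (x : ℝ) : BddAbove ((fun t => min (h t) 1) '' Ici x) := by
  refine ⟨1, ?_⟩; rintro y ⟨t, -, rfl⟩; exact min_le_right _ _

lemma neH (h : ℝ → ℝ) (x : ℝ) : ((fun t => min (h t) 1) '' Ici x).Nonempty :=
  ⟨_, ⟨x, le_refl x, rfl⟩⟩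

lemma le_auxH (h : ℝ → ℝ) {x t : ℝ} (ht : x ≤ t) : min (h t) 1 ≤ auxH h x :=
  le_csSup (bddH h x) ⟨t, ht, rfl⟩

lemma auxH_le (h : ℝ → ℝ) {x c : ℝ} (hc : ∀ t ≥ x, min (h t) 1 ≤ c) : auxH h x ≤ c :=
  csSup_le (neH h x) (by rintro y ⟨t, ht, rfl⟩; exact hc t ht)

lemma auxH_le_one (h : ℝ → ℝ) (x : ℝ) : auxH h x ≤ 1 :=
  auxH_le h (fun t _ => min_le_right _ _)

lemma auxH_anti (h : ℝ → ℝ) : Antitone (auxH h) := fun x y hxy =>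
  csSup_le_csSup (bddH h x) (neH h y) (image_mono (Ici_subset_Ici.2 hxy))

variable {h : ℝ → ℝ}

lemma auxH_pos (hpos : ∀ x ≥ 0, 0 < h x) {x : ℝ} (hx : 0 ≤ x) : 0 < auxH h x :=
  lt_of_lt_of_le (lt_min (hpos x hx) one_pos) (le_auxH h le_rfl)

lemma auxH_tendsto (hpos : ∀ x ≥ 0, 0 < h x) (hlim : Tendsto h atTop (𝓝 0)) :
    Tendsto (auxH h) atTop (𝓝 0) := by
  rw [Metric.tendsto_atTop]
  intro ε hε
  have : ∀ᶠ t in atTop, h t < ε / 2 := by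
    have := Metric.tendsto_atTop.1 hlim (ε/2) (by linarith)
    obtain ⟨N, hN⟩ := this
    filter_upwards [eventually_ge_atTop N] with t ht
    have := hN t ht
    rw [Real.dist_eq, sub_zero] at this
    exact lt_of_le_of_lt (le_abs_self _) this
  obtain ⟨N, hN⟩ := eventually_atTop.1 this
  refine ⟨max N 0, fun x hx => ?_⟩
  rw [Real.dist_eq, sub_zero]
  have h1 : auxH h x ≤ ε / 2 := by
    refine auxH_le h fun t ht => min_le_of_left_le (le_of_lt (hN t ?_))
    exact le_trans (le_trans (le_max_left N 0) hx) ht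
  have h2 : 0 < auxH h x := auxH_pos hpos (le_trans (le_max_right N 0) hx)
  rw [abs_of_pos h2]; linarith

lemma auxM_one_le (hpos : ∀ x ≥ 0, 0 < h x) {x : ℝ} (hx : 0 ≤ x) : 1 ≤ auxM h x := by
  rw [auxM, le_inv_comm₀ one_pos (Real.sqrt_pos.2 (auxH_pos hpos hx))]
  simpa using Real.sqrt_le_sqrt (auxH_le_one h x)

lemma auxM_pos (hpos : ∀ x ≥ 0, 0 < h x) {x : ℝ} (hx : 0 ≤ x) : 0 < auxM h x :=
  lt_of_lt_of_le one_pos (auxM_one_le hpos hx)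

lemma auxM_mono (hpos : ∀ x ≥ 0, 0 < h x) {x y : ℝ} (hx : 0 ≤ x) (hxy : x ≤ y) :
    auxM h x ≤ auxM h y := by
  have hy : 0 < auxH h y := auxH_pos hpos (le_trans hx hxy)
  exact inv_anti₀ (Real.sqrt_pos.2 hy) (Real.sqrt_le_sqrt (auxH_anti h hxy))

lemma auxM_tendsto (hpos : ∀ x ≥ 0, 0 < h x) (hlim : Tendsto h atTop (𝓝 0)) :
    Tendsto (auxM h) atTop atTop := by
  apply Filter.Tendsto.inv_tendsto_nhdsGT_zero
  rw [tendsto_nhdsWithin_iff]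
  constructor
  · have : Tendsto (fun x => Real.sqrt (auxH h x)) atTop (𝓝 (Real.sqrt 0)) :=
      (Real.continuous_sqrt.tendsto 0).comp (auxH_tendsto hpos hlim)
    simpa using this
  · filter_upwards [eventually_ge_atTop (0:ℝ)] with x hx
    exact Real.sqrt_pos.2 (auxH_pos hpos hx)

lemma auxS_pos (x : ℝ) : 0 < auxS x := Real.exp_pos _

lemma auxS_mono {x y : ℝ} (hx : 0 ≤ x) (hxy : x ≤ y) : auxS x ≤ auxS y := by
  apply Real.exp_le_exp.2
  rcases le_or_gt (Real.log x) 0 with h1 | h1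
  · rw [Real.sqrt_eq_zero'.2 h1]; exact Real.sqrt_nonneg _
  · have hx1 : (1:ℝ) < x := by
      by_contra hc
      push_neg at hc
      exact absurd (Real.log_nonpos hx hc) (not_le.2 h1)
    exact Real.sqrt_le_sqrt (Real.log_le_log (by linarith) hxy)

lemma sqrt_tendsto_atTop : Tendsto Real.sqrt atTop atTop := by
  refine tendsto_atTop_atTop.2 fun b => ⟨max 0 b ^ 2, fun a ha => ?_⟩
  have := Real.sqrt_le_sqrt ha
  rw [Real.sqrt_sq (le_max_left 0 b)] at this
  exact (le_max_right 0 b).trans this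

lemma auxS_tendsto : Tendsto auxS atTop atTop :=
  Real.tendsto_exp_atTop.comp (sqrt_tendsto_atTop.comp Real.tendsto_log_atTop)

lemma sqrt_diff_key {u c : ℝ} (hu : 1 ≤ u) (hc : |c| ≤ u) :
    |Real.sqrt (u + c) - Real.sqrt u| ≤ |c| / Real.sqrt u := by
  have habs := abs_le.1 hc
  have h1 : 0 ≤ u + c := by linarith
  have h0u : (0:ℝ) ≤ u := by linarith
  have h2 : 0 < Real.sqrt u := Real.sqrt_pos.2 (by linarith)
  have e1 : Real.sqrt (u + c) ^ 2 = u + c := Real.sq_sqrt h1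
  have e2 : Real.sqrt u ^ 2 = u := Real.sq_sqrt h0u
  have h3 : (Real.sqrt (u + c) - Real.sqrt u) * (Real.sqrt (u + c) + Real.sqrt u) = c := by
    linear_combination e1 - e2
  have h4 : 0 < Real.sqrt (u + c) + Real.sqrt u :=
    lt_of_lt_of_le h2 (le_add_of_nonneg_left (Real.sqrt_nonneg _))
  have h5 : Real.sqrt (u + c) - Real.sqrt u = c / (Real.sqrt (u + c) + Real.sqrt u) := by
    field_simp [h4.ne']
    linarith [h3]
  rw [h5, abs_div, abs_of_pos h4]
  gcongr
  exact le_add_of_nonneg_left (Real.sqrt_nonneg _)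

lemma auxS_ratio {q : ℝ} (hq : 0 < q) :
    Tendsto (fun x => auxS (q * x) / auxS x) atTop (𝓝 1) := by
  have hd : Tendsto (fun x => Real.sqrt (Real.log (q * x)) - Real.sqrt (Real.log x))
      atTop (𝓝 0) := by
    apply squeeze_zero_norm' (a := fun x => |Real.log q| / Real.sqrt (Real.log x))
    · filter_upwards [eventually_ge_atTop (Real.exp (max 1 |Real.log q|))] with x hx
      have hx0 : 0 < x := lt_of_lt_of_le (Real.exp_pos _) hx
      have hlx : max 1 |Real.log q| ≤ Real.log x := by
        rw [← Real.log_exp (max 1 |Real.log q|)]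
        exact Real.log_le_log (Real.exp_pos _) hx
      have hlog : Real.log (q * x) = Real.log x + Real.log q := by
        rw [Real.log_mul hq.ne' hx0.ne']; ring
      rw [Real.norm_eq_abs, hlog]
      exact sqrt_diff_key (le_trans (le_max_left _ _) hlx) (le_trans (le_max_right _ _) hlx)
    · have h1 : Tendsto (fun x : ℝ => (Real.sqrt (Real.log x))⁻¹) atTop (𝓝 0) :=
        (sqrt_tendsto_atTop.comp Real.tendsto_log_atTop).inv_tendsto_atTop
      have := h1.const_mul |Real.log q|
      simpa [div_eq_mul_inv] using this
  have heq : (fun x => auxS (q * x) / auxS x) =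
      fun x => Real.exp (Real.sqrt (Real.log (q * x)) - Real.sqrt (Real.log x)) :=
    funext fun x => (Real.exp_sub _ _).symm
  rw [heq]
  have := (Real.continuous_exp.tendsto 0).comp hd
  simpa [Function.comp_def] using this

lemma auxG_pos (hpos : ∀ x ≥ 0, 0 < h x) {t : ℝ} (ht : 0 ≤ t) : 0 < auxM h t / auxS t :=
  div_pos (auxM_pos hpos ht) (auxS_pos t)

lemma phi_bddBelow (hpos : ∀ x ≥ 0, 0 < h x) (x : ℝ) :
    BddBelow ((fun t => auxM h t / auxS t) '' Icc 0 x) := by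
  refine ⟨0, ?_⟩; rintro y ⟨t, ht, rfl⟩; exact (auxG_pos hpos ht.1).le

lemma phi_le (hpos : ∀ x ≥ 0, 0 < h x) {x t : ℝ} (ht : t ∈ Icc 0 x) :
    auxPhi h x ≤ auxM h t / auxS t :=
  csInf_le (phi_bddBelow hpos x) ⟨t, ht, rfl⟩

lemma le_phi {x c : ℝ} (hx : 0 ≤ x) (hc : ∀ t ∈ Icc 0 x, c ≤ auxM h t / auxS t) :
    c ≤ auxPhi h x :=
  le_csInf ((Set.nonempty_Icc.2 hx).image _) (by rintro y ⟨t, ht, rfl⟩; exact hc t ht)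

lemma phi_anti (hpos : ∀ x ≥ 0, 0 < h x) {x y : ℝ} (hx : 0 ≤ x) (hxy : x ≤ y) :
    auxPhi h y ≤ auxPhi h x :=
  csInf_le_csInf (phi_bddBelow hpos y) ((Set.nonempty_Icc.2 hx).image _)
    (image_mono (Icc_subset_Icc_right hxy))

lemma one_le_auxL (hpos : ∀ x ≥ 0, 0 < h x) {x : ℝ} (hx : 0 ≤ x) : 1 ≤ auxL h x := by
  have h1 : (auxS x)⁻¹ ≤ auxPhi h x := by
    refine le_phi hx fun t ht => ?_
    rw [div_eq_mul_inv]
    calc (auxS x)⁻¹ ≤ (auxS t)⁻¹ := inv_anti₀ (auxS_pos t) (auxS_mono ht.1 ht.2)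
      _ ≤ auxM h t * (auxS t)⁻¹ := by
          nth_rewrite 1 [← one_mul (auxS t)⁻¹]
          exact mul_le_mul_of_nonneg_right (auxM_one_le hpos ht.1) (inv_pos.2 (auxS_pos t)).le
  have := mul_le_mul_of_nonneg_left h1 (auxS_pos x).le
  rwa [mul_inv_cancel₀ (auxS_pos x).ne'] at this

lemma auxL_pos (hpos : ∀ x ≥ 0, 0 < h x) {x : ℝ} (hx : 0 ≤ x) : 0 < auxL h x :=
  lt_of_lt_of_le one_pos (one_le_auxL hpos hx)

lemma auxL_le_M (hpos : ∀ x ≥ 0, 0 < h x) {x : ℝ} (hx : 0 ≤ x) : auxL h x ≤ auxM h x := by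
  have h1 : auxPhi h x ≤ auxM h x / auxS x := phi_le hpos ⟨hx, le_rfl⟩
  have := mul_le_mul_of_nonneg_left h1 (auxS_pos x).le
  rwa [mul_div_cancel₀ _ (auxS_pos x).ne'] at this

lemma auxL_mono (hpos : ∀ x ≥ 0, 0 < h x) {x y : ℝ} (hx : 0 ≤ x) (hxy : x ≤ y) :
    auxL h x ≤ auxL h y := by
  have hy : 0 ≤ y := le_trans hx hxy
  have key : auxL h x / auxS y ≤ auxPhi h y := by
    refine le_phi hy fun t ht => ?_
    rw [div_le_div_iff₀ (auxS_pos y) (auxS_pos t)]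
    rcases le_or_gt t x with htx | htx
    · have h1 : auxPhi h x ≤ auxM h t / auxS t := phi_le hpos ⟨ht.1, htx⟩
      have h2 : auxL h x ≤ auxS x * (auxM h t / auxS t) :=
        mul_le_mul_of_nonneg_left h1 (auxS_pos x).le
      calc auxL h x * auxS t ≤ auxS x * (auxM h t / auxS t) * auxS t :=
            mul_le_mul_of_nonneg_right h2 (auxS_pos t).le
        _ = auxM h t * auxS x := by
            rw [mul_assoc, div_mul_cancel₀ _ (auxS_pos t).ne', mul_comm]
        _ ≤ auxM h t * auxS y :=
            mul_le_mul_of_nonneg_left (auxS_mono hx hxy) (auxM_pos hpos ht.1).le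
    · calc auxL h x * auxS t ≤ auxM h x * auxS t :=
            mul_le_mul_of_nonneg_right (auxL_le_M hpos hx) (auxS_pos t).le
        _ ≤ auxM h t * auxS y := by
            apply mul_le_mul (auxM_mono hpos hx htx.le) (auxS_mono ht.1 ht.2)
              (auxS_pos t).le (auxM_pos hpos ht.1).le
  have := mul_le_mul_of_nonneg_left key (auxS_pos y).le
  rwa [mul_div_cancel₀ _ (auxS_pos y).ne'] at this

lemma auxL_ratio_le (hpos : ∀ x ≥ 0, 0 < h x) {a b : ℝ} (ha : 0 ≤ a) (hab : a ≤ b) :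
    auxL h b ≤ (auxS b / auxS a) * auxL h a := by
  have h1 : auxPhi h b ≤ auxPhi h a := phi_anti hpos ha hab
  have h2 : auxL h b ≤ auxS b * auxPhi h a :=
    mul_le_mul_of_nonneg_left h1 (auxS_pos b).le
  calc auxL h b ≤ auxS b * auxPhi h a := h2
    _ = (auxS b / auxS a) * auxL h a := by
        unfold auxL
        rw [div_mul_eq_mul_div, mul_comm (auxS a), ← mul_assoc,
          mul_div_assoc, div_self (auxS_pos a).ne', mul_one]

lemma auxL_slowly (hpos : ∀ x ≥ 0, 0 < h x) {q : ℝ} (hq : 0 < q) :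
    Tendsto (fun x => auxL h (q * x) / auxL h x) atTop (𝓝 1) := by
  rcases le_or_gt 1 q with hq1 | hq1
  · refine tendsto_of_tendsto_of_tendsto_of_le_of_le'
      (tendsto_const_nhds (x := (1:ℝ))) (auxS_ratio hq) ?_ ?_
    · filter_upwards [eventually_ge_atTop (0:ℝ)] with x hx
      have hxq : x ≤ q * x := le_mul_of_one_le_left hx hq1
      exact (one_le_div (auxL_pos hpos hx)).2 (auxL_mono hpos hx hxq)
    · filter_upwards [eventually_ge_atTop (0:ℝ)] with x hx
      have hxq : x ≤ q * x := le_mul_of_one_le_left hx hq1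
      rw [div_le_div_iff₀ (auxL_pos hpos hx) (auxS_pos x)]
      have h2 := auxL_ratio_le hpos hx hxq
      calc auxL h (q * x) * auxS x ≤ (auxS (q * x) / auxS x * auxL h x) * auxS x :=
            mul_le_mul_of_nonneg_right h2 (auxS_pos x).le
        _ = auxS (q * x) * auxL h x := by
            field_simp
            rw [mul_assoc (auxS (q * x)), div_eq_iff (auxS_pos x).ne']
            ring
  · refine tendsto_of_tendsto_of_tendsto_of_le_of_le'
      (auxS_ratio hq) (tendsto_const_nhds (x := (1:ℝ))) ?_ ?_
    · filter_upwards [eventually_ge_atTop (0:ℝ)] with x hx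
      have hq0 : 0 ≤ q * x := mul_nonneg hq.le hx
      have hxq : q * x ≤ x := mul_le_of_le_one_left hx hq1.le
      rw [div_le_div_iff₀ (auxS_pos x) (auxL_pos hpos hx)]
      have h2 := auxL_ratio_le hpos hq0 hxq
      calc auxS (q * x) * auxL h x
          ≤ auxS (q * x) * ((auxS x / auxS (q * x)) * auxL h (q * x)) :=
            mul_le_mul_of_nonneg_left h2 (auxS_pos _).le
        _ = auxL h (q * x) * auxS x := by
            rw [div_mul_eq_mul_div, mul_div_assoc', mul_div_cancel_left₀ _ (auxS_pos (q*x)).ne',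
              mul_comm]
    · filter_upwards [eventually_ge_atTop (0:ℝ)] with x hx
      have hq0 : 0 ≤ q * x := mul_nonneg hq.le hx
      have hxq : q * x ≤ x := mul_le_of_le_one_left hx hq1.le
      exact (div_le_one (auxL_pos hpos hx)).2 (auxL_mono hpos hq0 hxq)

lemma auxL_atTop (hpos : ∀ x ≥ 0, 0 < h x) (hlim : Tendsto h atTop (𝓝 0)) :
    Tendsto (auxL h) atTop atTop := by
  rw [tendsto_atTop]
  intro C
  set C' : ℝ := max C 1 with hC'
  have hC'pos : 0 < C' := lt_of_lt_of_le one_pos (le_max_right _ _)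
  obtain ⟨T0, hT0⟩ := eventually_atTop.1 ((auxM_tendsto hpos hlim).eventually_ge_atTop C')
  set T : ℝ := max T0 0 with hT
  have hT0' : 0 ≤ T := le_max_right _ _
  have hMT : ∀ t ≥ T, C' ≤ auxM h t := fun t ht => hT0 t (le_trans (le_max_left _ _) ht)
  have hS : ∀ᶠ x in atTop, C' * auxS T ≤ auxS x := auxS_tendsto.eventually_ge_atTop _
  filter_upwards [hS, eventually_ge_atTop T] with x hSx hTx
  have hx0 : 0 ≤ x := le_trans hT0' hTx
  have key : C' / auxS x ≤ auxPhi h x := by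
    refine le_phi hx0 fun t ht => ?_
    rw [div_le_div_iff₀ (auxS_pos x) (auxS_pos t)]
    rcases le_or_gt T t with hTt | hTt
    · calc C' * auxS t ≤ auxM h t * auxS t :=
            mul_le_mul_of_nonneg_right (hMT t hTt) (auxS_pos t).le
        _ ≤ auxM h t * auxS x :=
            mul_le_mul_of_nonneg_left (auxS_mono ht.1 ht.2) (auxM_pos hpos ht.1).le
    · calc C' * auxS t ≤ C' * auxS T :=
            mul_le_mul_of_nonneg_left (auxS_mono ht.1 hTt.le) hC'pos.le
        _ ≤ auxS x := hSx
        _ = 1 * auxS x := (one_mul _).symm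
        _ ≤ auxM h t * auxS x :=
            mul_le_mul_of_nonneg_right (auxM_one_le hpos ht.1) (auxS_pos x).le
  have := mul_le_mul_of_nonneg_left key (auxS_pos x).le
  rw [mul_div_cancel₀ _ (auxS_pos x).ne'] at this
  exact le_trans (le_max_left C 1) this

lemma auxL_mul_h (hpos : ∀ x ≥ 0, 0 < h x) (hlim : Tendsto h atTop (𝓝 0)) :
    Tendsto (fun x => auxL h x * h x) atTop (𝓝 0) := by
  have hsq : Tendsto (fun x => Real.sqrt (auxH h x)) atTop (𝓝 0) := by
    have := (Real.continuous_sqrt.tendsto 0).comp (auxH_tendsto hpos hlim)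
    simpa [Function.comp_def] using this
  apply squeeze_zero' ?_ ?_ hsq
  · filter_upwards [eventually_ge_atTop (0:ℝ)] with x hx
    exact mul_nonneg (auxL_pos hpos hx).le (hpos x hx).le
  · have hev : ∀ᶠ x in atTop, h x ≤ 1 := by
      have := hlim.eventually (eventually_le_nhds (show (0:ℝ) < 1 by norm_num))
      exact this
    filter_upwards [hev, eventually_ge_atTop (0:ℝ)] with x hx1 hx0
    have hH : h x ≤ auxH h x := by
      have := le_auxH h (le_refl x)
      rwa [min_eq_left hx1] at this
    have hHpos : 0 < auxH h x := auxH_pos hpos hx0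
    calc auxL h x * h x ≤ auxM h x * h x :=
          mul_le_mul_of_nonneg_right (auxL_le_M hpos hx0) (hpos x hx0).le
      _ ≤ auxM h x * auxH h x :=
          mul_le_mul_of_nonneg_left hH (auxM_pos hpos hx0).le
      _ = Real.sqrt (auxH h x) := by
          rw [auxM]
          rw [← Real.mul_self_sqrt hHpos.le]
          field_simp
          rw [Real.sqrt_sq (Real.sqrt_nonneg _)]

lemma auxS_contAt {x : ℝ} (hx : 0 < x) : ContinuousAt auxS x :=
  Real.continuous_exp.continuousAt.comp
    (Real.continuous_sqrt.continuousAt.comp (Real.continuousAt_log hx.ne'))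

lemma phi_left_cont (hpos : ∀ x ≥ 0, 0 < h x) {x : ℝ} (hx : 0 < x) :
    Tendsto (auxPhi h) (𝓝[<] x) (𝓝 (auxPhi h x)) := by
  rw [tendsto_order]
  constructor
  · intro a ha
    filter_upwards [Ioo_mem_nhdsLT_of_mem (show x ∈ Ioc 0 x from ⟨hx, le_rfl⟩)] with y hy
    exact lt_of_lt_of_le ha (phi_anti hpos hy.1.le hy.2.le)
  · intro b hb
    have hex : ∃ y0, 0 ≤ y0 ∧ y0 < x ∧ auxPhi h y0 < b := by
      obtain ⟨v, ⟨t, ht, rfl⟩, hvb⟩ :=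
        exists_lt_of_csInf_lt ((Set.nonempty_Icc.2 hx.le).image _) hb
      rcases lt_or_eq_of_le ht.2 with htx | htx
      · exact ⟨t, ht.1, htx, lt_of_le_of_lt (phi_le hpos ⟨ht.1, le_rfl⟩) hvb⟩
      · subst htx
        have hcont : Tendsto (fun y => auxM h t / auxS y) (𝓝[<] t) (𝓝 (auxM h t / auxS t)) :=
          Tendsto.div tendsto_const_nhds ((auxS_contAt hx).continuousWithinAt)
            (auxS_pos t).ne'
        have hev := hcont.eventually_lt_const hvb
        obtain ⟨y0, hy0, hy0'⟩ :=
          (hev.and (Ioo_mem_nhdsLT_of_mem (show t ∈ Ioc 0 t from ⟨hx, le_rfl⟩))).exists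
        refine ⟨y0, hy0'.1.le, hy0'.2, ?_⟩
        calc auxPhi h y0 ≤ auxM h y0 / auxS y0 := phi_le hpos ⟨hy0'.1.le, le_rfl⟩
          _ ≤ auxM h t / auxS y0 :=
              (div_le_div_iff_of_pos_right (auxS_pos y0)).2 (auxM_mono hpos hy0'.1.le hy0'.2.le)
          _ < b := hy0
    obtain ⟨y0, hy00, hy0x, hy0b⟩ := hex
    filter_upwards [Ioo_mem_nhdsLT_of_mem (show x ∈ Ioc y0 x from ⟨hy0x, le_rfl⟩)] with y hy
    exact lt_of_le_of_lt (phi_anti hpos hy00 hy.1.le) hy0b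

lemma auxL_left_cont (hpos : ∀ x ≥ 0, 0 < h x) {x : ℝ} (hx : 0 < x) :
    ContinuousWithinAt (auxL h) (Iio x) x := by
  have h1 : ContinuousWithinAt auxS (Iio x) x := (auxS_contAt hx).continuousWithinAt
  have h2 : ContinuousWithinAt (auxPhi h) (Iio x) x := phi_left_cont hpos hx
  exact h1.mul h2

theorem stmt12 (h : ℝ → ℝ) (hpos : ∀ x ≥ 0, 0 < h x) (hlim : Tendsto h atTop (𝓝 0)) :
    ∃ L : ℝ → ℝ,
      MonotoneOn L (Ici 0) ∧
      (∀ x > 0, ContinuousWithinAt L (Iio x) x) ∧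
      (∀ x ≥ 0, 1 ≤ L x) ∧
      (∀ q > 0, Tendsto (fun x : ℝ => L (q * x) / L x) atTop (𝓝 1)) ∧
      Tendsto L atTop atTop ∧
      Tendsto (fun x => L x * h x) atTop (𝓝 0) := by
  exact ⟨auxL h, fun a ha b _ hab => auxL_mono hpos ha hab,
    fun x hx => auxL_left_cont hpos hx,
    fun x hx => one_le_auxL hpos hx,
    fun q hq => auxL_slowly hpos hq,
    auxL_atTop hpos hlim,
    auxL_mul_h hpos hlim⟩
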